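/- Let Γ = (V,E) be a finite simple graph with maximal vertex degree D > 0 and let k ∈ {1,…,|V|}. Then the function p ↦ p · ((2/D) · λ_k(p))^{1/p} is monotonically increasing on [1, +∞), where λ_k(p) is the k-th minimax eigenvalue of the up 0-Laplacian L^{up}_{0,p} of Γ. -/

import Mathlib

open scoped BigOperators

/-- The `p`-Rayleigh quotient of the up `0`-Laplacian of a graph:
`(Σ_{e∈E} |(δ₀f)(e)|^p) / (Σ_{v∈V} |f(v)|^p)`. -/
noncomputable def rayleighP {V : Type*} [Fintype V] [DecidableEq V] (G : SimpleGraph V)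
    [DecidableRel G.Adj] (p : ℝ) (f : V → ℝ) : ℝ :=
  (∑ e ∈ G.edgeFinset,
      Sym2.lift ⟨fun u v => |f u - f v| ^ p, fun u v => by simp only []; rw [abs_sub_comm]⟩ e) /
    ∑ v, |f v| ^ p

/-- The Krasnoselskii genus of a set `S ⊆ ℝ^V`: the least `k ≥ 1` such that there is an odd
continuous map `S → ℝ^k ∖ {0}`. -/
noncomputable def genus {V : Type*} [Fintype V] (S : Set (V → ℝ)) : ℕ :=
  sInf {k : ℕ | 0 < k ∧ ∃ φ : (V → ℝ) → Fin k → ℝ,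
    ContinuousOn φ S ∧ (∀ x ∈ S, φ (-x) = -φ x) ∧ ∀ x ∈ S, φ x ≠ 0}

/-- The `k`-th minimax eigenvalue `λ_k(p)` of the up `0`-Laplacian `L^{up}_{0,p}`:
the infimum over all symmetric compact subsets `S ⊆ ℝ^V ∖ {0}` of Krasnoselskii genus `≥ k`
of the supremum of the `p`-Rayleigh quotient over `S`. -/
noncomputable def minimaxEig {V : Type*} [Fintype V] [DecidableEq V] (G : SimpleGraph V)
    [DecidableRel G.Adj] (k : ℕ) (p : ℝ) : ℝ :=
  sInf { r : ℝ | ∃ S : Set (V → ℝ), IsCompact S ∧ (∀ x ∈ S, x ≠ 0) ∧ (∀ x ∈ S, -x ∈ S) ∧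
    k ≤ genus S ∧ r = sSup (rayleighP G p '' S) }

section Aux

open Real Finset
open scoped NNReal

/-- Odd power map `t ↦ sign(t)|t|^σ`, written without `sign`. -/
noncomputable def psiOdd (σ t : ℝ) : ℝ := (max t 0) ^ σ - (max (-t) 0) ^ σ

lemma psiOdd_of_nonneg {σ t : ℝ} (hσ : 0 < σ) (ht : 0 ≤ t) : psiOdd σ t = t ^ σ := by
  unfold psiOdd
  rw [max_eq_left ht, max_eq_right (by linarith), Real.zero_rpow (ne_of_gt hσ), sub_zero]

lemma psiOdd_neg (σ t : ℝ) : psiOdd σ (-t) = - psiOdd σ t := by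
  unfold psiOdd; rw [neg_neg]; ring

lemma abs_psiOdd (σ : ℝ) (hσ : 0 < σ) (t : ℝ) : |psiOdd σ t| = |t| ^ σ := by
  rcases le_total 0 t with ht | ht
  · rw [psiOdd_of_nonneg hσ ht, abs_of_nonneg (Real.rpow_nonneg ht σ), abs_of_nonneg ht]
  · have h := psiOdd_of_nonneg hσ (by linarith : (0:ℝ) ≤ -t)
    rw [psiOdd_neg] at h
    have : psiOdd σ t = -((-t) ^ σ) := by linarith [h]
    rw [this, abs_neg, abs_of_nonneg (Real.rpow_nonneg (by linarith) σ), abs_of_nonpos ht]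

lemma psiOdd_continuous {σ : ℝ} (hσ : 0 < σ) : Continuous (psiOdd σ) := by
  have h : ∀ g : ℝ → ℝ, Continuous g → Continuous (fun t => (max (g t) 0) ^ σ) := by
    intro g hg
    rw [continuous_iff_continuousAt]
    intro t
    exact (Real.continuousAt_rpow_const _ _ (Or.inr hσ.le)).comp
      ((hg.max continuous_const).continuousAt)
  exact (h _ continuous_id).sub (h _ continuous_neg)

lemma psiOdd_eq_zero {σ t : ℝ} (hσ : 0 < σ) (h : psiOdd σ t = 0) : t = 0 := by
  have := abs_psiOdd σ hσ t
  rw [h, abs_zero] at this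
  by_contra ht
  exact absurd this.symm (ne_of_gt (Real.rpow_pos_of_pos (abs_pos.2 ht) σ))

/-- `2^(1-1/σ) ≤ σ` for `σ ≥ 1`. -/
lemma two_rpow_le {σ : ℝ} (hσ : 1 ≤ σ) : (2:ℝ) ^ (1 - 1/σ) ≤ σ := by
  have hσ0 : 0 < σ := lt_of_lt_of_le one_pos hσ
  have h1 : Real.log (σ⁻¹) ≤ σ⁻¹ - 1 := Real.log_le_sub_one_of_pos (by positivity)
  rw [Real.log_inv] at h1
  have h2 : 1 - 1/σ ≤ Real.log σ := by rw [one_div]; linarith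
  have hl2 : Real.log 2 ≤ 1 := by
    have := Real.log_le_sub_one_of_pos (by norm_num : (0:ℝ) < 2); linarith
  have h3 : Real.log 2 * (1 - 1/σ) ≤ Real.log σ := by
    have h4 : 0 ≤ 1 - 1/σ := by
      have : 1/σ ≤ 1 := by rw [div_le_one hσ0]; exact hσ
      linarith
    nlinarith [Real.log_nonneg (by norm_num : (1:ℝ) ≤ 2)]
  calc (2:ℝ) ^ (1 - 1/σ) = Real.exp (Real.log 2 * (1 - 1/σ)) := Real.rpow_def_of_pos (by norm_num) _
    _ ≤ Real.exp (Real.log σ) := Real.exp_le_exp.2 h3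
    _ = σ := Real.exp_log hσ0

/-- Midpoint convexity of `t ↦ t^β` for `β ≤ 0`, positive arguments. -/
lemma midpoint_rpow_nonpos {β c x : ℝ} (hβ : β ≤ 0) (hcx : 0 < c - x) (hx : 0 ≤ x) :
    2 * c ^ β ≤ (c + x) ^ β + (c - x) ^ β := by
  have ha : 0 < c + x := by linarith
  have hc : 0 < c := by linarith
  set P := (c + x) * (c - x) with hP
  have hP0 : 0 < P := mul_pos ha hcx
  have hPc : P ≤ c * c := by nlinarith
  have h1 : (c*c) ^ (β/2) ≤ P ^ (β/2) :=
    Real.rpow_le_rpow_of_nonpos hP0 hPc (by linarith)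
  have hcc : (c*c) ^ (β/2) = c ^ β := by
    rw [show c * c = c ^ (2:ℝ) by rw [Real.rpow_two]; ring, ← Real.rpow_mul hc.le,
      show 2 * (β/2) = β by ring]
  set a := (c+x) ^ β with hadef
  set b := (c-x) ^ β with hbdef
  have ha0 : 0 < a := Real.rpow_pos_of_pos ha β
  have hb0 : 0 < b := Real.rpow_pos_of_pos hcx β
  have hab : a * b = P ^ β := (Real.mul_rpow ha.le hcx.le).symm
  have hsq : Real.sqrt (a*b) = P ^ (β/2) := by
    rw [hab, Real.sqrt_eq_rpow, ← Real.rpow_mul hP0.le]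
    ring_nf
  have hAMGM : 2 * Real.sqrt (a*b) ≤ a + b := by
    nlinarith [sq_nonneg (Real.sqrt a - Real.sqrt b), Real.sq_sqrt ha0.le, Real.sq_sqrt hb0.le,
      Real.sqrt_mul ha0.le b, Real.sqrt_nonneg (a*b)]
  calc 2 * c ^ β = 2 * ((c*c) ^ (β/2)) := by rw [hcc]
    _ ≤ 2 * (P ^ (β/2)) := by linarith
    _ = 2 * Real.sqrt (a*b) := by rw [hsq]
    _ ≤ a + b := hAMGM

/-- Key inequality: for `0 ≤ v ≤ u`, `σ ≥ 1`:
`u - v ≤ σ (u^(1/σ) - v^(1/σ)) ((u+v)/2)^(1-1/σ)`. -/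
lemma keyK {σ u v : ℝ} (hσ : 1 ≤ σ) (hv : 0 ≤ v) (hvu : v ≤ u) :
    u - v ≤ σ * (u ^ (1/σ) - v ^ (1/σ)) * ((u + v)/2) ^ (1 - 1/σ) := by
  have hσ0 : 0 < σ := lt_of_lt_of_le one_pos hσ
  have hτ0 : 0 < 1/σ := by positivity
  have hτ1 : 1/σ ≤ 1 := by rw [div_le_one hσ0]; exact hσ
  rcases eq_or_lt_of_le hv with hv0 | hv0
  · -- v = 0
    subst hv0
    rcases eq_or_lt_of_le hvu with rfl | hu0
    · simp
    · have h2 : (0:ℝ) < 2 ^ (1 - 1/σ) := Real.rpow_pos_of_pos two_pos _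
      have key : u * (2:ℝ) ^ (1 - 1/σ) ≤ σ * u := by nlinarith [two_rpow_le hσ]
      have h3 : u ^ (1/σ) * u ^ (1 - 1/σ) = u := by
        rw [← Real.rpow_add hu0]; norm_num
      rw [Real.zero_rpow (ne_of_gt hτ0), sub_zero, add_zero,
        Real.div_rpow hu0.le (by norm_num : (0:ℝ) ≤ 2)]
      have h4 : σ * u ^ (1/σ) * (u ^ (1-1/σ)/2 ^ ((1:ℝ)-1/σ)) = σ * u / 2 ^ ((1:ℝ)-1/σ) := by
        rw [show σ * u ^ (1/σ) * (u ^ (1-1/σ)/2 ^ ((1:ℝ)-1/σ))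
            = σ * (u ^ (1/σ) * u ^ (1-1/σ)) / 2 ^ ((1:ℝ)-1/σ) by ring, h3]
      rw [sub_zero, h4, le_div_iff₀ h2]
      nlinarith [key]
  · rcases eq_or_lt_of_le hvu with rfl | huv
    · simp
    set τ := 1/σ with hτ
    set c := (u + v)/2 with hc
    set s₀ := (u - v)/2 with hs₀
    have hc0 : 0 < c := by rw [hc]; linarith
    have hs₀0 : 0 < s₀ := by rw [hs₀]; linarith
    have hcs : c - s₀ = v := by rw [hc, hs₀]; ring
    have hcu : c + s₀ = u := by rw [hc, hs₀]; ring
    set g : ℝ → ℝ := fun s => (c + s) ^ τ - (c - s) ^ τ - 2 * τ * c ^ (τ - 1) * s with hg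
    have hder : ∀ s ∈ Set.Icc (0:ℝ) s₀,
        HasDerivAt g (τ * (c + s) ^ (τ - 1) + τ * (c - s) ^ (τ - 1) - 2 * τ * c ^ (τ - 1)) s := by
      intro s hs
      have h1 : (0:ℝ) < c + s := by have := hs.1; linarith
      have h2 : (0:ℝ) < c - s := by have := hs.2; linarith
      have d1 : HasDerivAt (fun s : ℝ => (c + s) ^ τ) (τ * (c + s) ^ (τ - 1)) s := by
        have := (Real.hasDerivAt_rpow_const (x := c + s) (p := τ) (Or.inl h1.ne')).comp s
          ((hasDerivAt_id s).const_add c)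
        rw [mul_one] at this
        exact this
      have d2 : HasDerivAt (fun s : ℝ => (c - s) ^ τ) (-(τ * (c - s) ^ (τ - 1))) s := by
        have := (Real.hasDerivAt_rpow_const (x := c - s) (p := τ) (Or.inl h2.ne')).comp s
          ((hasDerivAt_id s).neg.const_add c)
        rw [show -(τ * (c - s) ^ (τ - 1)) = τ * (c - s) ^ (τ - 1) * -1 by ring]
        exact this
      have d3 : HasDerivAt (fun s : ℝ => 2 * τ * c ^ (τ - 1) * s) (2 * τ * c ^ (τ - 1)) s := by
        simpa using (hasDerivAt_id s).const_mul (2 * τ * c ^ (τ - 1))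
      have := (d1.sub d2).sub d3
      rw [show τ * (c + s) ^ (τ - 1) + τ * (c - s) ^ (τ - 1) - 2 * τ * c ^ (τ - 1)
          = τ * (c + s) ^ (τ - 1) - -(τ * (c - s) ^ (τ - 1)) - 2 * τ * c ^ (τ - 1) by ring]
      exact this
    have hmono : MonotoneOn g (Set.Icc 0 s₀) := by
      apply monotoneOn_of_deriv_nonneg (convex_Icc 0 s₀)
      · exact fun s hs => ((hder s hs).continuousAt).continuousWithinAt
      · intro s hs
        rw [interior_Icc] at hs
        exact ((hder s (Set.mem_Icc_of_Ioo hs)).differentiableAt).differentiableWithinAt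
      · intro s hs
        rw [interior_Icc] at hs
        rw [(hder s (Set.mem_Icc_of_Ioo hs)).deriv]
        have h2 : 0 < c - s := by have : s < s₀ := hs.2; linarith
        have hmid := midpoint_rpow_nonpos (β := τ - 1) (by linarith) h2 hs.1.le
        nlinarith [hmid, hτ0]
    have hle : g 0 ≤ g s₀ :=
      hmono (Set.left_mem_Icc.2 hs₀0.le) (Set.right_mem_Icc.2 hs₀0.le) hs₀0.le
    have hg0 : g 0 = 0 := by simp [hg]
    have hgs : g s₀ = u ^ τ - v ^ τ - τ * c ^ (τ - 1) * (u - v) := by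
      rw [hg]; simp only []; rw [hcs, hcu, hs₀]; ring
    have hkey : τ * c ^ (τ - 1) * (u - v) ≤ u ^ τ - v ^ τ := by
      rw [hg0] at hle; rw [hgs] at hle; linarith
    have hcp : (0:ℝ) < c ^ (1 - τ) := Real.rpow_pos_of_pos hc0 _
    have hmul := mul_le_mul_of_nonneg_left hkey (by positivity : (0:ℝ) ≤ σ * c ^ (1 - τ))
    have hsimp : σ * c ^ (1 - τ) * (τ * c ^ (τ - 1) * (u - v)) = u - v := by
      have hone : c ^ (1 - τ) * c ^ (τ - 1) = 1 := by
        rw [← Real.rpow_add hc0]; norm_num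
      have hστ : σ * τ = 1 := by rw [hτ]; field_simp
      calc σ * c ^ (1 - τ) * (τ * c ^ (τ - 1) * (u - v))
          = (σ * τ) * (c ^ (1 - τ) * c ^ (τ - 1)) * (u - v) := by ring
        _ = u - v := by rw [hone, hστ]; ring
    calc u - v = σ * c ^ (1 - τ) * (τ * c ^ (τ - 1) * (u - v)) := hsimp.symm
      _ ≤ σ * c ^ (1 - τ) * (u ^ τ - v ^ τ) := hmul
      _ = σ * (u ^ τ - v ^ τ) * ((u + v)/2) ^ (1 - τ) := by rw [hc]; ring

lemma rpow_add_le {x y τ : ℝ} (hx : 0 ≤ x) (hy : 0 ≤ y) (hτ0 : 0 ≤ τ) (hτ1 : τ ≤ 1) :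
    (x + y) ^ τ ≤ x ^ τ + y ^ τ := by
  have := NNReal.rpow_add_le_add_rpow x.toNNReal y.toNNReal hτ0 hτ1
  have hco : ((x.toNNReal + y.toNNReal : ℝ≥0) : ℝ) = x + y := by
    rw [NNReal.coe_add, Real.coe_toNNReal x hx, Real.coe_toNNReal y hy]
  calc (x + y) ^ τ = ((x.toNNReal + y.toNNReal : ℝ≥0) : ℝ) ^ τ := by rw [hco]
    _ = (((x.toNNReal + y.toNNReal) ^ τ : ℝ≥0) : ℝ) := by rw [NNReal.coe_rpow]
    _ ≤ ((x.toNNReal ^ τ + y.toNNReal ^ τ : ℝ≥0) : ℝ) := by exact_mod_cast this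
    _ = x ^ τ + y ^ τ := by
        rw [NNReal.coe_add, NNReal.coe_rpow, NNReal.coe_rpow, Real.coe_toNNReal x hx,
          Real.coe_toNNReal y hy]

/-- The nonnegative case of the master scalar inequality. -/
lemma scalar_nonneg {σ a b : ℝ} (hσ : 1 ≤ σ) (hb : 0 ≤ b) (hba : b ≤ a) :
    a ^ σ - b ^ σ ≤ σ * (a - b) * ((a ^ σ + b ^ σ)/2) ^ (1 - 1/σ) := by
  have hσ0 : 0 < σ := lt_of_lt_of_le one_pos hσ
  have ha : 0 ≤ a := le_trans hb hba
  have hKey := keyK hσ (Real.rpow_nonneg hb σ) (Real.rpow_le_rpow hb hba hσ0.le)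
  have h1 : (a ^ σ) ^ (1/σ) = a := by
    rw [← Real.rpow_mul ha, mul_one_div, div_self (ne_of_gt hσ0), Real.rpow_one]
  have h2 : (b ^ σ) ^ (1/σ) = b := by
    rw [← Real.rpow_mul hb, mul_one_div, div_self (ne_of_gt hσ0), Real.rpow_one]
  rw [h1, h2] at hKey
  exact hKey

lemma scalar_sigma_aux {σ : ℝ} (hσ : 1 ≤ σ) (a b : ℝ) (hba : b ≤ a) :
    |psiOdd σ a - psiOdd σ b| ≤ σ * |a - b| * ((|a| ^ σ + |b| ^ σ)/2) ^ (1 - 1/σ) := by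
  have hσ0 : 0 < σ := lt_of_lt_of_le one_pos hσ
  rcases le_or_gt 0 b with hb | hb
  · have ha : 0 ≤ a := le_trans hb hba
    rw [psiOdd_of_nonneg hσ0 ha, psiOdd_of_nonneg hσ0 hb, abs_of_nonneg ha, abs_of_nonneg hb,
      abs_of_nonneg (by linarith : (0:ℝ) ≤ a - b),
      abs_of_nonneg (sub_nonneg.2 (Real.rpow_le_rpow hb hba hσ0.le))]
    exact scalar_nonneg hσ hb hba
  · rcases le_or_gt 0 a with ha | ha
    · have hnb : (0:ℝ) < -b := by linarith
      have hpa : psiOdd σ a = a ^ σ := psiOdd_of_nonneg hσ0 ha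
      have hpb : psiOdd σ b = -((-b) ^ σ) := by
        have := psiOdd_of_nonneg hσ0 hnb.le
        rw [psiOdd_neg] at this; linarith
      set u := a ^ σ with hu
      set w := (-b) ^ σ with hw
      have hu0 : 0 ≤ u := Real.rpow_nonneg ha σ
      have hw0 : 0 < w := Real.rpow_pos_of_pos hnb σ
      have habs : |psiOdd σ a - psiOdd σ b| = u + w := by
        rw [hpa, hpb]; rw [abs_of_nonneg (by linarith)]; ring
      have habs2 : |a - b| = a + -b := by rw [abs_of_nonneg (by linarith)]; ring
      have hmean : (|a| ^ σ + |b| ^ σ)/2 = (u + w)/2 := by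
        rw [abs_of_nonneg ha, abs_of_neg hb]
      rw [habs, habs2, hmean]
      have hs1 : (u + w) ^ (1/σ) ≤ a + -b := by
        have hsub := rpow_add_le hu0 hw0.le (by positivity : (0:ℝ) ≤ 1/σ)
          (by rw [div_le_one hσ0]; exact hσ)
        have h1 : u ^ (1/σ) = a := by
          rw [hu, ← Real.rpow_mul ha, mul_one_div, div_self (ne_of_gt hσ0), Real.rpow_one]
        have h2 : w ^ (1/σ) = -b := by
          rw [hw, ← Real.rpow_mul hnb.le, mul_one_div, div_self (ne_of_gt hσ0), Real.rpow_one]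
        rw [h1, h2] at hsub; exact hsub
      have hp : 0 < u + w := by linarith
      have hs2 : u + w ≤ σ * (u + w) ^ (1/σ) * ((u + w)/2) ^ (1 - 1/σ) := by
        have hrw : (u + w) ^ (1/σ) * ((u + w)/2) ^ (1 - 1/σ)
            = (u + w) / 2 ^ ((1:ℝ) - 1/σ) := by
          rw [Real.div_rpow hp.le (by norm_num : (0:ℝ) ≤ 2),
            show (u+w) ^ (1/σ) * ((u+w) ^ (1-1/σ)/2 ^ ((1:ℝ)-1/σ))
              = ((u+w) ^ (1/σ) * (u+w) ^ (1-1/σ))/2 ^ ((1:ℝ)-1/σ) by ring,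
            ← Real.rpow_add hp]
          norm_num
        rw [mul_assoc, hrw]
        have h2 : (0:ℝ) < 2 ^ ((1:ℝ) - 1/σ) := Real.rpow_pos_of_pos two_pos _
        rw [← mul_div_assoc, le_div_iff₀ h2]
        nlinarith [two_rpow_le hσ, hp]
      calc u + w ≤ σ * (u + w) ^ (1/σ) * ((u + w)/2) ^ (1 - 1/σ) := hs2
        _ ≤ σ * (a + -b) * ((u + w)/2) ^ (1 - 1/σ) := by
            have hM : (0:ℝ) ≤ ((u + w)/2) ^ (1 - 1/σ) := Real.rpow_nonneg (by linarith) _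
            exact mul_le_mul_of_nonneg_right (mul_le_mul_of_nonneg_left hs1 hσ0.le) hM
    · have h1 : |psiOdd σ a - psiOdd σ b| = |psiOdd σ (-b) - psiOdd σ (-a)| := by
        rw [psiOdd_neg, psiOdd_neg]
        congr 1; ring
      have hnb : (0:ℝ) ≤ -a := by linarith
      have key := scalar_nonneg hσ hnb (by linarith : -a ≤ -b)
      rw [h1, psiOdd_of_nonneg hσ0 (by linarith : (0:ℝ) ≤ -b), psiOdd_of_nonneg hσ0 hnb]
      have he : |a - b| = -b - -a := by
        rw [abs_of_nonneg (by linarith : (0:ℝ) ≤ a - b)]; ring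
      have hm : (|a| ^ σ + |b| ^ σ)/2 = ((-b) ^ σ + (-a) ^ σ)/2 := by
        rw [abs_of_neg ha, abs_of_neg hb]; ring
      rw [he, hm]
      rw [abs_of_nonneg (sub_nonneg.2 (Real.rpow_le_rpow hnb (by linarith) hσ0.le))]
      exact key

lemma scalar_sigma {σ : ℝ} (hσ : 1 ≤ σ) (a b : ℝ) :
    |psiOdd σ a - psiOdd σ b| ≤ σ * |a - b| * ((|a| ^ σ + |b| ^ σ)/2) ^ (1 - 1/σ) := by
  rcases le_total b a with hba | hab
  · exact scalar_sigma_aux hσ a b hba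
  · calc |psiOdd σ a - psiOdd σ b| = |psiOdd σ b - psiOdd σ a| := abs_sub_comm _ _
      _ ≤ σ * |b - a| * ((|b| ^ σ + |a| ^ σ)/2) ^ (1 - 1/σ) := scalar_sigma_aux hσ b a hab
      _ = σ * |a - b| * ((|a| ^ σ + |b| ^ σ)/2) ^ (1 - 1/σ) := by
          rw [abs_sub_comm, add_comm (|b| ^ σ)]

lemma scalar_pq {p q : ℝ} (hp : 1 ≤ p) (hpq : p < q) (a b : ℝ) :
    |psiOdd (q/p) a - psiOdd (q/p) b| ^ p
      ≤ (q/p) ^ p * |a - b| ^ p * ((|a| ^ q + |b| ^ q)/2) ^ (1 - p/q) := by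
  have hp0 : (0:ℝ) < p := lt_of_lt_of_le one_pos hp
  have hq0 : (0:ℝ) < q := lt_trans hp0 hpq
  set σ := q/p with hσdef
  have hσ : 1 ≤ σ := (one_le_div hp0).2 hpq.le
  have hσ0 : 0 < σ := lt_of_lt_of_le one_pos hσ
  set X := |a| ^ σ with hX
  set Y := |b| ^ σ with hY
  have hX0 : 0 ≤ X := Real.rpow_nonneg (abs_nonneg a) σ
  have hY0 : 0 ≤ Y := Real.rpow_nonneg (abs_nonneg b) σ
  set Mσ := (X + Y)/2 with hMσ
  set Mq := (|a| ^ q + |b| ^ q)/2 with hMq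
  have hMσ0 : 0 ≤ Mσ := by positivity
  have hMq0 : 0 ≤ Mq := by
    have := Real.rpow_nonneg (abs_nonneg a) q
    have := Real.rpow_nonneg (abs_nonneg b) q
    rw [hMq]; positivity
  have hXp : X ^ p = |a| ^ q := by
    rw [hX, ← Real.rpow_mul (abs_nonneg a), hσdef, div_mul_cancel₀ q (ne_of_gt hp0)]
  have hYp : Y ^ p = |b| ^ q := by
    rw [hY, ← Real.rpow_mul (abs_nonneg b), hσdef, div_mul_cancel₀ q (ne_of_gt hp0)]
  have hconv := (convexOn_rpow hp).2 (Set.mem_Ici.2 hX0) (Set.mem_Ici.2 hY0)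
    (by norm_num : (0:ℝ) ≤ 1/2) (by norm_num : (0:ℝ) ≤ 1/2) (by norm_num)
  have hPM : Mσ ^ p ≤ Mq := by
    have h1 : (1/2 : ℝ) • X + (1/2 : ℝ) • Y = Mσ := by rw [hMσ]; simp [smul_eq_mul]; ring
    have h2 : (1/2 : ℝ) • (X ^ p) + (1/2 : ℝ) • (Y ^ p) = Mq := by
      rw [hXp, hYp, hMq]; simp [smul_eq_mul]; ring
    rw [h1, h2] at hconv
    exact hconv
  have hPM2 : Mσ ≤ Mq ^ (1/p) := by
    have := Real.rpow_le_rpow (Real.rpow_nonneg hMσ0 p) hPM (by positivity : (0:ℝ) ≤ 1/p)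
    rwa [← Real.rpow_mul hMσ0, mul_one_div, div_self (ne_of_gt hp0), Real.rpow_one] at this
  have hbase := scalar_sigma hσ a b
  have hstep : |psiOdd σ a - psiOdd σ b| ≤ σ * |a - b| * (Mq ^ (1/p)) ^ (1 - 1/σ) := by
    refine le_trans hbase ?_
    have hmono : Mσ ^ (1 - 1/σ) ≤ (Mq ^ (1/p)) ^ (1 - 1/σ) := by
      apply Real.rpow_le_rpow hMσ0 hPM2
      have : 1/σ ≤ 1 := by rw [div_le_one hσ0]; exact hσ
      linarith
    have hpos : (0:ℝ) ≤ σ * |a - b| := by positivity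
    exact mul_le_mul_of_nonneg_left hmono hpos
  have hfin := Real.rpow_le_rpow (abs_nonneg _) hstep hp0.le
  rw [Real.mul_rpow (by positivity : (0:ℝ) ≤ σ * |a - b|)
      (Real.rpow_nonneg (Real.rpow_nonneg hMq0 _) _),
    Real.mul_rpow hσ0.le (abs_nonneg _)] at hfin
  have hE : ((Mq ^ (1/p)) ^ (1 - 1/σ)) ^ p = Mq ^ (1 - p/q) := by
    rw [← Real.rpow_mul hMq0, ← Real.rpow_mul hMq0]
    congr 1
    rw [hσdef]
    field_simp
  rw [hE] at hfin
  exact hfin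

lemma edge_sum_eq {V : Type*} [Fintype V] [DecidableEq V] (G : SimpleGraph V)
    [DecidableRel G.Adj] (h : V → ℝ) :
    ∑ e ∈ G.edgeFinset,
        Sym2.lift ⟨fun u v => h u + h v, fun u v => by simp only []; rw [add_comm]⟩ e
      = ∑ v, (G.degree v : ℝ) * h v := by
  have step1 : ∀ e ∈ G.edgeFinset,
      Sym2.lift ⟨fun u v => h u + h v, fun u v => by simp only []; rw [add_comm]⟩ e
        = ∑ v, if v ∈ e then h v else 0 := by
    intro e he
    induction e with
    | _ u w =>
      have hadj : G.Adj u w := by rwa [SimpleGraph.mem_edgeFinset, SimpleGraph.mem_edgeSet] at he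
      have hne : u ≠ w := hadj.ne
      rw [Sym2.lift_mk]
      simp only []
      have key : ∀ v : V, (if v ∈ s(u, w) then h v else 0)
          = (if v = u then h v else 0) + (if v = w then h v else 0) := by
        intro v
        by_cases h1 : v = u <;> by_cases h2 : v = w <;>
          simp [Sym2.mem_iff, h1, h2] <;>
          intro hc <;> first | exact absurd hc hne | exact absurd hc.symm hne
      rw [Finset.sum_congr rfl (fun v _ => key v), Finset.sum_add_distrib,
        Finset.sum_ite_eq' Finset.univ u h, Finset.sum_ite_eq' Finset.univ w h]
      simp
  rw [Finset.sum_congr rfl step1, Finset.sum_comm]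
  apply Finset.sum_congr rfl
  intro v _
  rw [← Finset.sum_filter]
  have hcard : {e ∈ G.edgeFinset | v ∈ e} = G.incidenceFinset v :=
    (SimpleGraph.incidenceFinset_eq_filter G v).symm
  rw [hcard, Finset.sum_const, SimpleGraph.card_incidenceFinset_eq_degree, nsmul_eq_mul]


lemma lift_nonneg_aux {V : Type*} (F : {f : V → V → ℝ // ∀ a b, f a b = f b a})
    (h : ∀ u v, 0 ≤ F.1 u v) (e : Sym2 V) : 0 ≤ Sym2.lift F e := by
  induction e with
  | _ u v => rw [Sym2.lift_mk]; exact h u v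

lemma rayleigh_bound {V : Type*} [Fintype V] [DecidableEq V] (G : SimpleGraph V)
    [DecidableRel G.Adj] {p q : ℝ} (hp : 1 ≤ p) (hpq : p < q) (D : ℕ)
    (hDdeg : ∀ v, G.degree v ≤ D) (f : V → ℝ) (hf : f ≠ 0) :
    rayleighP G p (fun v => psiOdd (q/p) (f v))
      ≤ (q/p) ^ p * ((D:ℝ)/2) ^ (1 - p/q) * (rayleighP G q f) ^ (p/q) := by
  have hp0 : (0:ℝ) < p := lt_of_lt_of_le one_pos hp
  have hq0 : (0:ℝ) < q := lt_trans hp0 hpq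
  have hqp0 : (0:ℝ) < q - p := by linarith
  set σ := q/p with hσdef
  have hσ : 1 ≤ σ := (one_le_div hp0).2 hpq.le
  have hσ0 : 0 < σ := lt_of_lt_of_le one_pos hσ
  set Dq := ∑ v, |f v| ^ q with hDqdef
  obtain ⟨v₀, hv₀⟩ : ∃ v, f v ≠ 0 := Function.ne_iff.1 hf
  have hDq : 0 < Dq := Finset.sum_pos' (fun v _ => Real.rpow_nonneg (abs_nonneg _) q)
    ⟨v₀, Finset.mem_univ _, Real.rpow_pos_of_pos (abs_pos.2 hv₀) q⟩
  set Nq := ∑ e ∈ G.edgeFinset,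
      Sym2.lift ⟨fun u v => |f u - f v| ^ q,
        fun u v => by simp only []; rw [abs_sub_comm]⟩ e with hNqdef
  have hNq0 : 0 ≤ Nq := Finset.sum_nonneg (fun e _ =>
    lift_nonneg_aux _ (fun u v => Real.rpow_nonneg (abs_nonneg _) q) e)
  -- the three auxiliary edge functions
  set l0 : Sym2 V → ℝ := fun e => Sym2.lift
    ⟨fun u v => |psiOdd σ (f u) - psiOdd σ (f v)| ^ p,
      fun u v => by simp only []; rw [abs_sub_comm]⟩ e with hl0def
  set l1 : Sym2 V → ℝ := fun e => Sym2.lift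
    ⟨fun u v => |f u - f v| ^ p, fun u v => by simp only []; rw [abs_sub_comm]⟩ e with hl1def
  set l2 : Sym2 V → ℝ := fun e => Sym2.lift
    ⟨fun u v => ((|f u| ^ q + |f v| ^ q)/2) ^ (1 - p/q),
      fun u v => by simp only []; rw [add_comm (|f u| ^ q)]⟩ e with hl2def
  set lm : Sym2 V → ℝ := fun e => Sym2.lift
    ⟨fun u v => (|f u| ^ q + |f v| ^ q)/2,
      fun u v => by simp only []; rw [add_comm (|f u| ^ q)]⟩ e with hlmdef
  have hl1nn : ∀ e ∈ G.edgeFinset, 0 ≤ l1 e := fun e _ =>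
    lift_nonneg_aux _ (fun u v => Real.rpow_nonneg (abs_nonneg _) p) e
  have hl2nn : ∀ e ∈ G.edgeFinset, 0 ≤ l2 e := fun e _ =>
    lift_nonneg_aux _ (fun u v => Real.rpow_nonneg (by positivity) _) e
  have hlmnn : ∀ e ∈ G.edgeFinset, 0 ≤ lm e := fun e _ =>
    lift_nonneg_aux _ (fun u v => by positivity) e
  -- denominator identity
  have hden : (∑ v, |psiOdd σ (f v)| ^ p) = Dq := by
    apply Finset.sum_congr rfl
    intro v _
    rw [abs_psiOdd σ hσ0, ← Real.rpow_mul (abs_nonneg _), hσdef,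
      div_mul_cancel₀ q (ne_of_gt hp0)]
  -- step 1 : pointwise scalar inequality
  have step1 : (∑ e ∈ G.edgeFinset, l0 e) ≤ σ ^ p * ∑ e ∈ G.edgeFinset, l1 e * l2 e := by
    rw [Finset.mul_sum]
    apply Finset.sum_le_sum
    intro e _
    induction e with
    | _ u w =>
      rw [hl0def, hl1def, hl2def]
      simp only [Sym2.lift_mk]
      rw [← mul_assoc, hσdef]
      exact scalar_pq hp hpq (f u) (f w)
  -- step 2 : Hölder
  have hconj : Real.HolderConjugate (q/p) (q/(q-p)) := by
    rw [Real.holderConjugate_iff]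
    constructor
    · exact (one_lt_div hp0).2 hpq
    · rw [inv_div, inv_div, ← add_div,
        show p + (q - p) = q by ring, div_self (ne_of_gt hq0)]
  have hH := Real.inner_le_Lp_mul_Lq_of_nonneg (s := G.edgeFinset) hconj hl1nn hl2nn
  have e1 : (∑ e ∈ G.edgeFinset, l1 e ^ (q/p)) = Nq := by
    apply Finset.sum_congr rfl
    intro e _
    induction e with
    | _ u w =>
      rw [hl1def]
      simp only [Sym2.lift_mk]
      rw [← Real.rpow_mul (abs_nonneg _), mul_comm p (q/p), div_mul_cancel₀ q (ne_of_gt hp0)]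
  have e2 : (∑ e ∈ G.edgeFinset, l2 e ^ (q/(q-p))) = ∑ e ∈ G.edgeFinset, lm e := by
    apply Finset.sum_congr rfl
    intro e _
    induction e with
    | _ u w =>
      rw [hl2def, hlmdef]
      simp only [Sym2.lift_mk]
      have hm0 : (0:ℝ) ≤ (|f u| ^ q + |f w| ^ q)/2 := by positivity
      rw [← Real.rpow_mul hm0, show (1 - p/q) * (q/(q-p)) = 1 by field_simp, Real.rpow_one]
  have e3 : (∑ e ∈ G.edgeFinset, lm e) ≤ (D:ℝ)/2 * Dq := by
    have he : ∀ e ∈ G.edgeFinset, lm e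
        = (Sym2.lift ⟨fun u v => (fun x => |f x| ^ q) u + (fun x => |f x| ^ q) v,
            fun u v => by simp only []; rw [add_comm]⟩ e) / 2 := by
      intro e _
      induction e with
      | _ u w =>
        rw [hlmdef]
        simp only [Sym2.lift_mk]
    rw [Finset.sum_congr rfl he, ← Finset.sum_div, edge_sum_eq G (fun v => |f v| ^ q)]
    rw [div_le_iff₀ (by norm_num : (0:ℝ) < 2)]
    have hb : (∑ v, (G.degree v : ℝ) * |f v| ^ q) ≤ (D:ℝ) * Dq := by
      rw [hDqdef, Finset.mul_sum]
      apply Finset.sum_le_sum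
      intro v _
      exact mul_le_mul_of_nonneg_right
        (by exact_mod_cast hDdeg v) (Real.rpow_nonneg (abs_nonneg _) q)
    calc (∑ v, (G.degree v : ℝ) * |f v| ^ q) ≤ (D:ℝ) * Dq := hb
      _ = (D:ℝ)/2 * Dq * 2 := by ring
  -- assemble the numerator bound
  have hlm0 : 0 ≤ ∑ e ∈ G.edgeFinset, lm e := Finset.sum_nonneg hlmnn
  have hD2 : (0:ℝ) ≤ (D:ℝ)/2 := by positivity
  have hexp : 1/(q/p) = p/q := one_div_div q p
  have hexp2 : 1/(q/(q-p)) = (q-p)/q := one_div_div q (q-p)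
  have step2 : (∑ e ∈ G.edgeFinset, l1 e * l2 e)
      ≤ Nq ^ (p/q) * ((D:ℝ)/2 * Dq) ^ ((q-p)/q) := by
    rw [hexp, hexp2, e1, e2] at hH
    refine le_trans hH ?_
    have h4 : (∑ e ∈ G.edgeFinset, lm e) ^ ((q-p)/q) ≤ ((D:ℝ)/2 * Dq) ^ ((q-p)/q) :=
      Real.rpow_le_rpow hlm0 e3 (by positivity)
    exact mul_le_mul_of_nonneg_left h4 (Real.rpow_nonneg hNq0 _)
  have hnum : (∑ e ∈ G.edgeFinset, l0 e)
      ≤ σ ^ p * (Nq ^ (p/q) * ((D:ℝ)/2 * Dq) ^ ((q-p)/q)) := by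
    refine le_trans step1 ?_
    exact mul_le_mul_of_nonneg_left step2 (Real.rpow_nonneg hσ0.le _)
  -- final computation
  have hray : rayleighP G p (fun v => psiOdd σ (f v)) = (∑ e ∈ G.edgeFinset, l0 e) / Dq := by
    rw [show rayleighP G p (fun v => psiOdd σ (f v))
        = (∑ e ∈ G.edgeFinset, l0 e) / (∑ v, |psiOdd σ (f v)| ^ p) from rfl, hden]
  have hrayq : rayleighP G q f = Nq / Dq := rfl
  rw [hray, hrayq]
  rw [div_le_iff₀ hDq]
  have hsplit : ((D:ℝ)/2 * Dq) ^ ((q-p)/q) = ((D:ℝ)/2) ^ ((q-p)/q) * Dq ^ ((q-p)/q) :=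
    Real.mul_rpow hD2 hDq.le
  have hqexp : (q-p)/q = 1 - p/q := by field_simp
  have hDqq : Dq ^ ((q-p)/q) = Dq / Dq ^ (p/q) := by
    rw [hqexp, Real.rpow_sub hDq, Real.rpow_one]
  calc (∑ e ∈ G.edgeFinset, l0 e)
      ≤ σ ^ p * (Nq ^ (p/q) * ((D:ℝ)/2 * Dq) ^ ((q-p)/q)) := hnum
    _ = σ ^ p * ((D:ℝ)/2) ^ (1 - p/q) * (Nq/Dq) ^ (p/q) * Dq := by
        rw [hsplit, hDqq, hqexp, Real.div_rpow hNq0 hDq.le]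
        ring


lemma rayleigh_nonneg {V : Type*} [Fintype V] [DecidableEq V] (G : SimpleGraph V)
    [DecidableRel G.Adj] (p : ℝ) (f : V → ℝ) : 0 ≤ rayleighP G p f := by
  unfold rayleighP
  apply div_nonneg
  · exact Finset.sum_nonneg (fun e _ =>
      lift_nonneg_aux _ (fun u v => Real.rpow_nonneg (abs_nonneg _) p) e)
  · exact Finset.sum_nonneg (fun v _ => Real.rpow_nonneg (abs_nonneg _) p)

lemma minimaxEig_nonneg {V : Type*} [Fintype V] [DecidableEq V] (G : SimpleGraph V)
    [DecidableRel G.Adj] (k : ℕ) (p : ℝ) : 0 ≤ minimaxEig G k p := by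
  apply Real.sInf_nonneg
  rintro r ⟨S, -, -, -, -, rfl⟩
  apply Real.sSup_nonneg
  rintro x ⟨f, -, rfl⟩
  exact rayleigh_nonneg G p f

lemma rayleigh_continuousOn {V : Type*} [Fintype V] [DecidableEq V] (G : SimpleGraph V)
    [DecidableRel G.Adj] {p : ℝ} (hp : 0 < p) {S : Set (V → ℝ)}
    (hS0 : ∀ x ∈ S, x ≠ 0) : ContinuousOn (rayleighP G p) S := by
  have habs : Continuous fun t : ℝ => |t| ^ p := by
    rw [continuous_iff_continuousAt]; intro t
    exact (Real.continuousAt_rpow_const _ _ (Or.inr hp.le)).comp continuous_abs.continuousAt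
  have hnum : Continuous fun f : V → ℝ => ∑ e ∈ G.edgeFinset,
      Sym2.lift ⟨fun u v => |f u - f v| ^ p,
        fun u v => by simp only []; rw [abs_sub_comm]⟩ e := by
    apply continuous_finset_sum
    intro e _
    induction e with
    | _ u w =>
      have hfun : (fun f : V → ℝ => Sym2.lift ⟨fun u v => |f u - f v| ^ p,
          fun u v => by simp only []; rw [abs_sub_comm]⟩ s(u, w))
          = fun f : V → ℝ => |f u - f w| ^ p := by
        funext f; rw [Sym2.lift_mk]
      rw [hfun]
      exact habs.comp ((continuous_apply u).sub (continuous_apply w))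
  have hdenc : Continuous fun f : V → ℝ => ∑ v, |f v| ^ p :=
    continuous_finset_sum _ (fun v _ => habs.comp (continuous_apply v))
  unfold rayleighP
  apply ContinuousOn.div hnum.continuousOn hdenc.continuousOn
  intro f hfS
  obtain ⟨v, hv⟩ := Function.ne_iff.1 (hS0 f hfS)
  exact ne_of_gt (Finset.sum_pos' (fun v _ => Real.rpow_nonneg (abs_nonneg _) p)
    ⟨v, Finset.mem_univ _, Real.rpow_pos_of_pos (abs_pos.2 hv) p⟩)

lemma genus_le_genus_image {V : Type*} [Fintype V] [Nonempty V] {S : Set (V → ℝ)}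
    (ψ : (V → ℝ) → (V → ℝ)) (hψc : Continuous ψ) (hodd : ∀ x, ψ (-x) = - ψ x)
    (hT0 : ∀ y ∈ ψ '' S, y ≠ 0) : genus S ≤ genus (ψ '' S) := by
  unfold genus
  have hMne : {k : ℕ | 0 < k ∧ ∃ φ : (V → ℝ) → Fin k → ℝ,
      ContinuousOn φ (ψ '' S) ∧ (∀ x ∈ ψ '' S, φ (-x) = -φ x) ∧
      ∀ x ∈ ψ '' S, φ x ≠ 0}.Nonempty := by
    refine ⟨Fintype.card V, Fintype.card_pos,
      fun y i => y ((Fintype.equivFin V).symm i), ?_, ?_, ?_⟩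
    · exact (continuous_pi (fun i => continuous_apply _)).continuousOn
    · intro x _
      funext i
      simp
    · intro y hy hc
      apply hT0 y hy
      funext v
      have h2 := congrFun hc ((Fintype.equivFin V) v)
      simpa using h2
  obtain ⟨hpos, φ, hφc, hφodd, hφnz⟩ := Nat.sInf_mem hMne
  apply Nat.sInf_le
  refine ⟨hpos, φ ∘ ψ, hφc.comp hψc.continuousOn (Set.mapsTo_image ψ S), ?_, ?_⟩
  · intro x hx
    show φ (ψ (-x)) = - φ (ψ x)
    rw [hodd x, hφodd (ψ x) (Set.mem_image_of_mem ψ hx)]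
  · intro x hx
    exact hφnz (ψ x) (Set.mem_image_of_mem ψ hx)

lemma minimax_key {V : Type*} [Fintype V] [DecidableEq V] [Nonempty V] (G : SimpleGraph V)
    [DecidableRel G.Adj] (k : ℕ) {p q : ℝ} (hp : 1 ≤ p) (hpq : p < q) (D : ℕ)
    (hDdeg : ∀ v, G.degree v ≤ D)
    (hEx : ∃ S : Set (V → ℝ), IsCompact S ∧ (∀ x ∈ S, x ≠ 0) ∧ (∀ x ∈ S, -x ∈ S) ∧
      k ≤ genus S) :
    minimaxEig G k p ≤ (q/p) ^ p * ((D:ℝ)/2) ^ (1 - p/q) * (minimaxEig G k q) ^ (p/q) := by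
  have hp0 : (0:ℝ) < p := lt_of_lt_of_le one_pos hp
  have hq0 : (0:ℝ) < q := lt_trans hp0 hpq
  set σ := q/p with hσdef
  have hσ : 1 ≤ σ := (one_le_div hp0).2 hpq.le
  have hσ0 : 0 < σ := lt_of_lt_of_le one_pos hσ
  set A := (q/p) ^ p * ((D:ℝ)/2) ^ (1 - p/q) with hAdef
  have hA0 : 0 ≤ A := mul_nonneg (Real.rpow_nonneg (by positivity) p)
    (Real.rpow_nonneg (by positivity) _)
  set Rq := { r : ℝ | ∃ S : Set (V → ℝ), IsCompact S ∧ (∀ x ∈ S, x ≠ 0) ∧ (∀ x ∈ S, -x ∈ S) ∧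
    k ≤ genus S ∧ r = sSup (rayleighP G q '' S) } with hRqdef
  have hRq0 : ∀ r ∈ Rq, 0 ≤ r := by
    rintro r ⟨S, -, -, -, -, rfl⟩
    apply Real.sSup_nonneg
    rintro x ⟨f, -, rfl⟩
    exact rayleigh_nonneg G q f
  have hRqne : Rq.Nonempty := by
    obtain ⟨S, hc, h0, hsym, hg⟩ := hEx
    exact ⟨sSup (rayleighP G q '' S), S, hc, h0, hsym, hg, rfl⟩
  have hLq : minimaxEig G k q = sInf Rq := rfl
  -- key step: image construction
  have key : ∀ r ∈ Rq, minimaxEig G k p ≤ A * r ^ (p/q) := by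
    rintro r ⟨S, hSc, hS0, hSsym, hSg, rfl⟩
    set ψS : (V → ℝ) → (V → ℝ) := fun f v => psiOdd σ (f v) with hψSdef
    have hψc : Continuous ψS :=
      continuous_pi (fun v => (psiOdd_continuous hσ0).comp (continuous_apply v))
    have hψodd : ∀ x, ψS (-x) = - ψS x := by
      intro x; funext v
      show psiOdd σ (-(x v)) = -(psiOdd σ (x v))
      exact psiOdd_neg σ (x v)
    set T := ψS '' S with hTdef
    have hT0 : ∀ y ∈ T, y ≠ 0 := by
      rintro y ⟨f, hfS, rfl⟩ hy0
      apply hS0 f hfS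
      funext v
      have := congrFun hy0 v
      exact psiOdd_eq_zero hσ0 this
    have hTc : IsCompact T := hSc.image hψc
    have hTsym : ∀ y ∈ T, -y ∈ T := by
      rintro y ⟨f, hfS, rfl⟩
      exact ⟨-f, hSsym f hfS, hψodd f⟩
    have hTg : k ≤ genus T := le_trans hSg (genus_le_genus_image ψS hψc hψodd hT0)
    -- the candidate value
    have hmem : sSup (rayleighP G p '' T) ∈ { r : ℝ | ∃ S : Set (V → ℝ), IsCompact S ∧
        (∀ x ∈ S, x ≠ 0) ∧ (∀ x ∈ S, -x ∈ S) ∧ k ≤ genus S ∧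
        r = sSup (rayleighP G p '' S) } := ⟨T, hTc, hT0, hTsym, hTg, rfl⟩
    have hbddp : BddBelow { r : ℝ | ∃ S : Set (V → ℝ), IsCompact S ∧
        (∀ x ∈ S, x ≠ 0) ∧ (∀ x ∈ S, -x ∈ S) ∧ k ≤ genus S ∧
        r = sSup (rayleighP G p '' S) } := by
      refine ⟨0, ?_⟩
      rintro r ⟨S', -, -, -, -, rfl⟩
      apply Real.sSup_nonneg
      rintro x ⟨f, -, rfl⟩
      exact rayleigh_nonneg G p f
    have h1 : minimaxEig G k p ≤ sSup (rayleighP G p '' T) := csInf_le hbddp hmem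
    refine le_trans h1 ?_
    -- now bound the sup
    have hr0 : 0 ≤ sSup (rayleighP G q '' S) := by
      apply Real.sSup_nonneg
      rintro x ⟨f, -, rfl⟩
      exact rayleigh_nonneg G q f
    apply Real.sSup_le
    · rintro x ⟨g, ⟨f, hfS, rfl⟩, rfl⟩
      have hbddq : BddAbove (rayleighP G q '' S) :=
        (hSc.image_of_continuousOn (rayleigh_continuousOn G hq0 hS0)).bddAbove
      have h2 : rayleighP G q f ≤ sSup (rayleighP G q '' S) :=
        le_csSup hbddq (Set.mem_image_of_mem _ hfS)
      have h3 := rayleigh_bound G hp hpq D hDdeg f (hS0 f hfS)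
      have h4 : (rayleighP G q f) ^ (p/q) ≤ (sSup (rayleighP G q '' S)) ^ (p/q) :=
        Real.rpow_le_rpow (rayleigh_nonneg G q f) h2 (by positivity)
      calc rayleighP G p (ψS f)
          ≤ (q/p) ^ p * ((D:ℝ)/2) ^ (1 - p/q) * (rayleighP G q f) ^ (p/q) := h3
        _ = A * (rayleighP G q f) ^ (p/q) := by rw [hAdef]
        _ ≤ A * (sSup (rayleighP G q '' S)) ^ (p/q) := mul_le_mul_of_nonneg_left h4 hA0
    · exact mul_nonneg hA0 (Real.rpow_nonneg hr0 _)
  -- pass to the infimum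
  have step : ∀ ε : ℝ, 0 < ε → minimaxEig G k p ≤ A * (minimaxEig G k q + ε) ^ (p/q) := by
    intro ε hε
    obtain ⟨r, hrR, hrlt⟩ := Real.lt_sInf_add_pos hRqne hε
    have h5 : r ^ (p/q) ≤ (minimaxEig G k q + ε) ^ (p/q) :=
      Real.rpow_le_rpow (hRq0 r hrR) (by rw [hLq]; exact hrlt.le) (by positivity)
    calc minimaxEig G k p ≤ A * r ^ (p/q) := key r hrR
      _ ≤ A * (minimaxEig G k q + ε) ^ (p/q) := mul_le_mul_of_nonneg_left h5 hA0
  have hLq0 : 0 ≤ minimaxEig G k q := minimaxEig_nonneg G k q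
  have hcont : ContinuousAt (fun ε : ℝ => A * (minimaxEig G k q + ε) ^ (p/q)) 0 := by
    apply ContinuousAt.mul continuousAt_const
    exact (Real.continuousAt_rpow_const _ _ (Or.inr (by positivity))).comp
      ((continuous_const.add continuous_id).continuousAt)
  have htd : Filter.Tendsto (fun ε : ℝ => A * (minimaxEig G k q + ε) ^ (p/q))
      (nhdsWithin 0 (Set.Ioi 0)) (nhds (A * (minimaxEig G k q + 0) ^ (p/q))) :=
    (hcont.tendsto).mono_left nhdsWithin_le_nhds
  have hfin := ge_of_tendsto htd (Filter.eventually_of_mem self_mem_nhdsWithin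
    (fun ε hε => step ε hε))
  rw [add_zero] at hfin
  rw [hAdef] at hfin
  exact hfin

end Aux

theorem stmt3 {V : Type*} [Fintype V] [DecidableEq V] [Nonempty V]
    (G : SimpleGraph V) [DecidableRel G.Adj]
    (hD : 0 < Finset.univ.sup (fun v => G.degree v))
    (k : ℕ) (hk1 : 1 ≤ k) (hk2 : k ≤ Fintype.card V) :
    MonotoneOn
      (fun p : ℝ =>
        p * ((2 / ((Finset.univ.sup (fun v => G.degree v) : ℕ) : ℝ)) * minimaxEig G k p)
          ^ (1 / p))
      (Set.Ici 1) := by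
  intro p hp q hq hpq
  simp only []
  rcases eq_or_lt_of_le hpq with rfl | hlt
  · exact le_rfl
  have hp1 : (1:ℝ) ≤ p := hp
  have hq1 : (1:ℝ) ≤ q := hq
  have hp0 : (0:ℝ) < p := lt_of_lt_of_le one_pos hp1
  have hq0 : (0:ℝ) < q := lt_of_lt_of_le one_pos hq1
  set Dn : ℕ := Finset.univ.sup (fun v => G.degree v) with hDndef
  have hDnR : (0:ℝ) < (Dn : ℝ) := by exact_mod_cast hD
  by_cases hEx : ∃ S : Set (V → ℝ), IsCompact S ∧ (∀ x ∈ S, x ≠ 0) ∧ (∀ x ∈ S, -x ∈ S) ∧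
      k ≤ genus S
  · -- the main case
    have hDdeg : ∀ v, G.degree v ≤ Dn := fun v => Finset.le_sup (f := fun v => G.degree v) (Finset.mem_univ v)
    have hkey := minimax_key G k hp1 hlt Dn hDdeg hEx
    have hLp0 : 0 ≤ minimaxEig G k p := minimaxEig_nonneg G k p
    have hLq0 : 0 ≤ minimaxEig G k q := minimaxEig_nonneg G k q
    have h2D : (0:ℝ) < 2 / (Dn : ℝ) := by positivity
    set X := 2 / (Dn : ℝ) * minimaxEig G k q with hXdef
    have hX0 : 0 ≤ X := mul_nonneg h2D.le hLq0
    -- step 1 : (2/Dn) * λp ≤ (q/p)^p * X^(p/q)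
    have hpow : 2 / (Dn:ℝ) * ((Dn:ℝ)/2) ^ (1 - p/q) = (2/(Dn:ℝ)) ^ (p/q) := by
      have h1 : ((Dn:ℝ)/2) = (2/(Dn:ℝ))⁻¹ := by rw [inv_div]
      rw [h1]
      calc 2/(Dn:ℝ) * ((2/(Dn:ℝ))⁻¹) ^ (1 - p/q)
          = 2/(Dn:ℝ) * ((2/(Dn:ℝ)) ^ (1 - p/q))⁻¹ := by rw [Real.inv_rpow h2D.le]
        _ = (2/(Dn:ℝ)) ^ (1:ℝ) / (2/(Dn:ℝ)) ^ (1 - p/q) := by rw [Real.rpow_one]; ring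
        _ = (2/(Dn:ℝ)) ^ ((1:ℝ) - (1 - p/q)) := (Real.rpow_sub h2D _ _).symm
        _ = (2/(Dn:ℝ)) ^ (p/q) := by ring_nf
    have step1 : 2 / (Dn:ℝ) * minimaxEig G k p ≤ (q/p) ^ p * X ^ (p/q) := by
      have h5 := mul_le_mul_of_nonneg_left hkey h2D.le
      refine le_trans h5 (le_of_eq ?_)
      rw [hXdef, Real.mul_rpow h2D.le hLq0]
      calc 2/(Dn:ℝ) * ((q/p) ^ p * ((Dn:ℝ)/2) ^ (1 - p/q) * (minimaxEig G k q) ^ (p/q))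
          = (q/p) ^ p * (2/(Dn:ℝ) * ((Dn:ℝ)/2) ^ (1 - p/q)) * (minimaxEig G k q) ^ (p/q) := by
            ring
        _ = (q/p) ^ p * ((2/(Dn:ℝ)) ^ (p/q) * (minimaxEig G k q) ^ (p/q)) := by
            rw [hpow]; ring
    -- step 2 : raise to power (1/p)
    have step2 : (2/(Dn:ℝ) * minimaxEig G k p) ^ (1/p) ≤ (q/p) * X ^ (1/q) := by
      have h6 := Real.rpow_le_rpow (mul_nonneg h2D.le hLp0) step1 (by positivity : (0:ℝ) ≤ 1/p)
      refine le_trans h6 (le_of_eq ?_)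
      rw [Real.mul_rpow (Real.rpow_nonneg (by positivity) p) (Real.rpow_nonneg hX0 _),
        ← Real.rpow_mul (by positivity : (0:ℝ) ≤ q/p),
        ← Real.rpow_mul hX0,
        show p * (1/p) = 1 by field_simp,
        show (p/q) * (1/p) = 1/q by field_simp,
        Real.rpow_one]
    calc p * (2/(Dn:ℝ) * minimaxEig G k p) ^ (1/p)
        ≤ p * ((q/p) * X ^ (1/q)) := mul_le_mul_of_nonneg_left step2 hp0.le
      _ = q * X ^ (1/q) := by field_simp
  · -- degenerate case : no admissible set, all eigenvalues are 0
    have h0 : ∀ t : ℝ, minimaxEig G k t = 0 := by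
      intro t
      have hemp : { r : ℝ | ∃ S : Set (V → ℝ), IsCompact S ∧ (∀ x ∈ S, x ≠ 0) ∧
          (∀ x ∈ S, -x ∈ S) ∧ k ≤ genus S ∧ r = sSup (rayleighP G t '' S) } = ∅ := by
        ext r
        simp only [Set.mem_setOf_eq, Set.mem_empty_iff_false, iff_false]
        rintro ⟨S, hc, hz, hsym, hg, -⟩
        exact hEx ⟨S, hc, hz, hsym, hg⟩
      rw [minimaxEig, hemp, Real.sInf_empty]
    have h1p : (1:ℝ)/p ≠ 0 := by positivity
    have h1q : (1:ℝ)/q ≠ 0 := by positivity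
    rw [h0 p, h0 q, mul_zero, Real.zero_rpow h1p, Real.zero_rpow h1q, mul_zero, mul_zero]
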